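/- Let S be a semigroup and let H be an H-class of S (an equivalence class of Green's relation ℋ = ℒ ∧ ℛ). If there exist a, b ∈ H with a·b ∈ H, then H·H = H and H is a subgroup of S (i.e., H is closed under multiplication and forms a group under the multiplication of S). -/

import Mathlib

/-- Green's relation ℒ on a semigroup. -/
def grL {S : Type*} [Semigroup S] (x y : S) : Prop :=
  ({z | ∃ s, z = s * x} ∪ {x}) = ({z | ∃ s, z = s * y} ∪ {y})

/-- Green's relation ℛ on a semigroup. -/
def grR {S : Type*} [Semigroup S] (x y : S) : Prop :=
  ({z | ∃ s, z = x * s} ∪ {x}) = ({z | ∃ s, z = y * s} ∪ {y})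

/-- Green's relation ℋ on a semigroup. -/
def grH {S : Type*} [Semigroup S] (x y : S) : Prop := grL x y ∧ grR x y

/-- Green's relation 𝒟 on a semigroup. -/
def grD {S : Type*} [Semigroup S] (x y : S) : Prop := ∃ z, grL x z ∧ grR z y

/-- Regular element of a semigroup. -/
def grReg {S : Type*} [Semigroup S] (x : S) : Prop := ∃ y, x * y * x = x

namespace HclassAux

variable {M : Type*} [Monoid M]

def eqL (x y : M) : Prop := (∃ u, y = u * x) ∧ (∃ u, x = u * y)
def eqR (x y : M) : Prop := (∃ u, y = x * u) ∧ (∃ u, x = y * u)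
def eqH (x y : M) : Prop := eqL x y ∧ eqR x y

lemma eqL_symm {x y : M} (h : eqL x y) : eqL y x := ⟨h.2, h.1⟩
lemma eqL_trans {x y z : M} (h1 : eqL x y) (h2 : eqL y z) : eqL x z := by
  obtain ⟨⟨u, hu⟩, ⟨v, hv⟩⟩ := h1; obtain ⟨⟨p, hp⟩, ⟨q, hq⟩⟩ := h2
  exact ⟨⟨p * u, by rw [hp, hu, mul_assoc]⟩, ⟨v * q, by rw [hv, hq, mul_assoc]⟩⟩
lemma eqR_symm {x y : M} (h : eqR x y) : eqR y x := ⟨h.2, h.1⟩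
lemma eqR_trans {x y z : M} (h1 : eqR x y) (h2 : eqR y z) : eqR x z := by
  obtain ⟨⟨u, hu⟩, ⟨v, hv⟩⟩ := h1; obtain ⟨⟨p, hp⟩, ⟨q, hq⟩⟩ := h2
  exact ⟨⟨u * p, by rw [hp, hu, mul_assoc]⟩, ⟨q * v, by rw [hv, hq, mul_assoc]⟩⟩

lemma right_step (x s t : M) (h : x * s * t = x) (z : M) (hz : eqL z x) :
    eqL (z * s) (x * s) ∧ z * s * t = z ∧ eqR z (z * s) := by
  obtain ⟨⟨u, hu⟩, ⟨v, hv⟩⟩ := hz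
  have h2 : z * s * t = z := by rw [hv, mul_assoc v, mul_assoc v, h]
  refine ⟨⟨⟨u, by rw [hu, mul_assoc]⟩, ⟨v, by rw [hv, mul_assoc]⟩⟩, h2, ⟨s, rfl⟩, ⟨t, h2.symm⟩⟩

lemma left_step (y s t : M) (h : t * (s * y) = y) (z : M) (hz : eqR z y) :
    eqR (s * z) (s * y) ∧ t * (s * z) = z ∧ eqL z (s * z) := by
  obtain ⟨⟨u, hu⟩, ⟨v, hv⟩⟩ := hz
  have h2 : t * (s * z) = z := by rw [hv, ← mul_assoc s, ← mul_assoc t, h]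
  refine ⟨⟨⟨u, by rw [hu, mul_assoc]⟩, ⟨v, by rw [hv, mul_assoc]⟩⟩, h2, ⟨s, rfl⟩, ⟨t, h2.symm⟩⟩

theorem monoid_main (e a b : M) (ha : eqH a e) (hb : eqH b e) (hab : eqH (a * b) e) :
    (∀ x, eqH x e → ∀ y, eqH y e → eqH (x * y) e) ∧
    (∃ i, eqH i e ∧ (∀ x, eqH x e → i * x = x ∧ x * i = x) ∧
      ∀ x, eqH x e → ∃ y, eqH y e ∧ x * y = i ∧ y * x = i) := by
  -- right translation by b maps H into H
  have stepr : ∀ x, eqH x e → eqH (x * b) e := by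
    intro x hx
    have hRab : eqR a (a * b) := eqR_trans ha.2 (eqR_symm hab.2)
    obtain ⟨t, ht⟩ := hRab.2
    have hLxa : eqL x a := eqL_trans hx.1 (eqL_symm ha.1)
    obtain ⟨h1, h2, h3⟩ := right_step a b t ht.symm x hLxa
    exact ⟨eqL_trans h1 hab.1, eqR_trans (eqR_symm h3) hx.2⟩
  -- left translation by a maps H into H
  have stepl : ∀ x, eqH x e → eqH (a * x) e := by
    intro x hx
    have hLb : eqL b (a * b) := eqL_trans hb.1 (eqL_symm hab.1)
    obtain ⟨s, hs⟩ := hLb.2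
    have hRxb : eqR x b := eqR_trans hx.2 (eqR_symm hb.2)
    obtain ⟨h1, h2, h3⟩ := left_step b a s hs.symm x hRxb
    exact ⟨eqL_trans (eqL_symm h3) hx.1, eqR_trans h1 hab.2⟩
  have closure : ∀ x, eqH x e → ∀ y, eqH y e → eqH (x * y) e := by
    intro x hx y hy
    have hxb := stepr x hx
    have hLb : eqL b (x * b) := eqL_trans hb.1 (eqL_symm hxb.1)
    obtain ⟨t', ht'⟩ := hLb.2
    have hRyb : eqR y b := eqR_trans hy.2 (eqR_symm hb.2)
    obtain ⟨h1, h2, h3⟩ := left_step b x t' ht'.symm y hRyb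
    exact ⟨eqL_trans (eqL_symm h3) hy.1, eqR_trans h1 hxb.2⟩
  -- left division within H
  have ldiv : ∀ x, eqH x e → ∀ z, eqH z e → ∃ w, eqH w e ∧ x * w = z := by
    intro x hx z hz
    have hxb := stepr x hx
    have hLb : eqL b (x * b) := eqL_trans hb.1 (eqL_symm hxb.1)
    obtain ⟨t', ht'⟩ := hLb.2
    have h0 : x * (t' * (x * b)) = x * b := by rw [← ht']
    have hRz : eqR z (x * b) := eqR_trans hz.2 (eqR_symm hxb.2)
    obtain ⟨h1, h2, h3⟩ := left_step (x * b) t' x h0 z hRz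
    rw [← ht'] at h1
    exact ⟨t' * z, ⟨eqL_trans (eqL_symm h3) hz.1, eqR_trans h1 hb.2⟩, h2⟩
  -- right division within H
  have rdiv : ∀ x, eqH x e → ∀ z, eqH z e → ∃ w, eqH w e ∧ w * x = z := by
    intro x hx z hz
    have hax := stepl x hx
    have hRa : eqR a (a * x) := eqR_trans ha.2 (eqR_symm hax.2)
    obtain ⟨t', ht'⟩ := hRa.2
    have h0 : a * x * t' * x = a * x := by rw [← ht']
    have hLz : eqL z (a * x) := eqL_trans hz.1 (eqL_symm hax.1)
    obtain ⟨h1, h2, h3⟩ := right_step (a * x) t' x h0 z hLz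
    rw [← ht'] at h1
    exact ⟨z * t', ⟨eqL_trans h1 ha.1, eqR_trans (eqR_symm h3) hz.2⟩, h2⟩
  obtain ⟨i, hi, hia⟩ := rdiv a ha a ha
  have lid : ∀ x, eqH x e → i * x = x := by
    intro x hx
    obtain ⟨w, hw, hww⟩ := ldiv a ha x hx
    rw [← hww, ← mul_assoc, hia]
  obtain ⟨i', hi', hai'⟩ := ldiv a ha a ha
  have rid : ∀ x, eqH x e → x * i' = x := by
    intro x hx
    obtain ⟨w, hw, hww⟩ := rdiv a ha x hx
    rw [← hww, mul_assoc, hai']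
  have hii : i = i' := by
    have h1 := rid i hi
    have h2 := lid i' hi'
    rw [← h1, h2]
  refine ⟨closure, i, hi, fun x hx => ⟨lid x hx, by rw [hii]; exact rid x hx⟩, ?_⟩
  intro x hx
  obtain ⟨y, hy, hyx⟩ := rdiv x hx i hi
  obtain ⟨y', hy', hxy'⟩ := ldiv x hx i hi
  have hyy : y = y' := by
    have h3 : y * (x * y') = y * i := by rw [hxy']
    rw [← mul_assoc, hyx, lid y' hy'] at h3
    rw [h3, hii, rid y hy]
  exact ⟨y, hy, by rw [hyy]; exact hxy', hyx⟩

end HclassAux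

open HclassAux

section Transfer

variable {S : Type*} [Semigroup S]

lemma sub_of_ld (x y : S) (h : ∃ u : WithOne S, (y : WithOne S) = u * x) :
    ({z | ∃ s, z = s * y} ∪ {y} : Set S) ⊆ ({z | ∃ s, z = s * x} ∪ {x}) := by
  obtain ⟨u, hu⟩ := h
  induction u using WithOne.recOneCoe with
  | one =>
    rw [one_mul, WithOne.coe_inj] at hu
    subst hu; exact le_refl _
  | coe s =>
    rw [← WithOne.coe_mul, WithOne.coe_inj] at hu
    intro z hz
    rcases hz with ⟨w, hw⟩ | hz
    · exact Or.inl ⟨w * s, by rw [hw, hu, mul_assoc]⟩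
    · rw [Set.mem_singleton_iff] at hz
      exact Or.inl ⟨s, by rw [hz, hu]⟩

lemma ld_of_eq (x y : S)
    (h : ({z | ∃ s, z = s * x} ∪ {x} : Set S) = ({z | ∃ s, z = s * y} ∪ {y})) :
    ∃ u : WithOne S, (y : WithOne S) = u * x := by
  have hy : y ∈ ({z | ∃ s, z = s * x} ∪ {x} : Set S) := by
    rw [h]; exact Or.inr rfl
  rcases hy with ⟨s, hs⟩ | hy
  · exact ⟨s, by rw [hs, WithOne.coe_mul]⟩
  · rw [Set.mem_singleton_iff] at hy
    exact ⟨1, by rw [hy, one_mul]⟩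

lemma grL_iff (x y : S) : grL x y ↔ eqL (x : WithOne S) (y : WithOne S) := by
  constructor
  · intro h
    exact ⟨ld_of_eq x y h, ld_of_eq y x h.symm⟩
  · intro ⟨h1, h2⟩
    exact Set.Subset.antisymm (sub_of_ld y x h2) (sub_of_ld x y h1)

lemma sub_of_rd (x y : S) (h : ∃ u : WithOne S, (y : WithOne S) = x * u) :
    ({z | ∃ s, z = y * s} ∪ {y} : Set S) ⊆ ({z | ∃ s, z = x * s} ∪ {x}) := by
  obtain ⟨u, hu⟩ := h
  induction u using WithOne.recOneCoe with
  | one =>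
    rw [mul_one, WithOne.coe_inj] at hu
    subst hu; exact le_refl _
  | coe s =>
    rw [← WithOne.coe_mul, WithOne.coe_inj] at hu
    intro z hz
    rcases hz with ⟨w, hw⟩ | hz
    · exact Or.inl ⟨s * w, by rw [hw, hu, mul_assoc]⟩
    · rw [Set.mem_singleton_iff] at hz
      exact Or.inl ⟨s, by rw [hz, hu]⟩

lemma rd_of_eq (x y : S)
    (h : ({z | ∃ s, z = x * s} ∪ {x} : Set S) = ({z | ∃ s, z = y * s} ∪ {y})) :
    ∃ u : WithOne S, (y : WithOne S) = x * u := by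
  have hy : y ∈ ({z | ∃ s, z = x * s} ∪ {x} : Set S) := by
    rw [h]; exact Or.inr rfl
  rcases hy with ⟨s, hs⟩ | hy
  · exact ⟨s, by rw [hs, WithOne.coe_mul]⟩
  · rw [Set.mem_singleton_iff] at hy
    exact ⟨1, by rw [hy, mul_one]⟩

lemma grR_iff (x y : S) : grR x y ↔ eqR (x : WithOne S) (y : WithOne S) := by
  constructor
  · intro h
    exact ⟨rd_of_eq x y h, rd_of_eq y x h.symm⟩
  · intro ⟨h1, h2⟩
    exact Set.Subset.antisymm (sub_of_rd y x h2) (sub_of_rd x y h1)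

lemma grH_iff (x y : S) : grH x y ↔ eqH (x : WithOne S) (y : WithOne S) := by
  unfold grH eqH
  rw [grL_iff, grR_iff]

end Transfer

/-- If an ℋ-class `H` contains two elements whose product is again in `H`,
then `H · H = H` and `H` is a subgroup of `S`. -/
theorem Hclass_group_of_mul_mem {S : Type*} [Semigroup S] (e : S) (H : Set S)
    (hH : H = {x | grH x e}) (a b : S) (ha : a ∈ H) (hb : b ∈ H) (hab : a * b ∈ H) :
    (∀ x ∈ H, ∀ y ∈ H, x * y ∈ H) ∧
    (∀ z ∈ H, ∃ x ∈ H, ∃ y ∈ H, z = x * y) ∧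
    (∃ i ∈ H, (∀ x ∈ H, i * x = x ∧ x * i = x) ∧
      ∀ x ∈ H, ∃ y ∈ H, x * y = i ∧ y * x = i) := by
  subst hH
  have mem_iff : ∀ x : S, x ∈ {x | grH x e} ↔ eqH (x : WithOne S) (e : WithOne S) := by
    intro x; exact grH_iff x e
  have ha' := (mem_iff a).1 ha
  have hb' := (mem_iff b).1 hb
  have hab' := (mem_iff (a * b)).1 hab
  rw [WithOne.coe_mul] at hab'
  obtain ⟨clos, i, hi, hid, hinv⟩ := monoid_main (e : WithOne S) a b ha' hb' hab'
  -- i is in the image of the coercion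
  obtain ⟨u, hu⟩ := hi.2.2
  have hj : ∃ j : S, i = (j : WithOne S) := by
    induction u using WithOne.recOneCoe with
    | one => exact ⟨e, by rw [hu, mul_one]⟩
    | coe s => exact ⟨e * s, by rw [hu, WithOne.coe_mul]⟩
  obtain ⟨j, hj⟩ := hj
  have hjH : j ∈ {x | grH x e} := (mem_iff j).2 (hj ▸ hi)
  have hclos : ∀ x ∈ {x | grH x e}, ∀ y ∈ {x | grH x e}, x * y ∈ {x | grH x e} := by
    intro x hx y hy
    refine (mem_iff (x * y)).2 ?_
    rw [WithOne.coe_mul]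
    exact clos x ((mem_iff x).1 hx) y ((mem_iff y).1 hy)
  have hjid : ∀ x ∈ {x | grH x e}, j * x = x ∧ x * j = x := by
    intro x hx
    obtain ⟨h1, h2⟩ := hid (x : WithOne S) ((mem_iff x).1 hx)
    constructor
    · rw [← WithOne.coe_inj, WithOne.coe_mul, ← hj, h1]
    · rw [← WithOne.coe_inj, WithOne.coe_mul, ← hj, h2]
  refine ⟨hclos, ?_, j, hjH, hjid, ?_⟩
  · intro z hz
    exact ⟨j, hjH, z, hz, ((hjid z hz).1).symm⟩
  · intro x hx
    obtain ⟨y, hy, h1, h2⟩ := hinv (x : WithOne S) ((mem_iff x).1 hx)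
    obtain ⟨u, hu⟩ := hy.2.2
    have hw : ∃ w : S, y = (w : WithOne S) := by
      induction u using WithOne.recOneCoe with
      | one => exact ⟨e, by rw [hu, mul_one]⟩
      | coe s => exact ⟨e * s, by rw [hu, WithOne.coe_mul]⟩
    obtain ⟨w, hw⟩ := hw
    refine ⟨w, (mem_iff w).2 (hw ▸ hy), ?_, ?_⟩
    · rw [← WithOne.coe_inj, WithOne.coe_mul, ← hw, ← hj, h1]
    · rw [← WithOne.coe_inj, WithOne.coe_mul, ← hw, ← hj, h2]
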